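/- Let X be a perfectly paracompact space, Y a regular space, and f : X → Y a Σ⁰₂-measurable mapping. Let A ⊆ Y be a set, let (x₀, V₀), …, (x_{k-1}, V_{k-1}) be finitely many pairs with x_t ∈ X and V_t ⊆ X such that each (x_t, V_t) is f-irreducible outside A, and let X′ ⊆ X be a set with X′ ⊆ A^f and X′ ∉ I_f. Then there exist a point x ∈ cl(X′) and an open set U ⊆ Y strongly disjoint from A such that f(x) ∈ U, each pair (x_t, V_t) is f-irreducible outside A ∪ U, and the pair (x, X′) is f-irreducible outside A ∪ U. -/

import Mathlib

open Set Topology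

/-- A set is Fσ if it is a countable union of closed sets. -/
def IsFsigma {X : Type*} [TopologicalSpace X] (s : Set X) : Prop :=
  ∃ C : ℕ → Set X, (∀ n, IsClosed (C n)) ∧ s = ⋃ n, C n

/-- A map is piecewise continuous if its domain is covered by countably many
closed sets on each of which the map is continuous. -/
def PiecewiseContinuous {X Y : Type*} [TopologicalSpace X] [TopologicalSpace Y]
    (f : X → Y) : Prop :=
  ∃ C : ℕ → Set X, (∀ n, IsClosed (C n)) ∧ (⋃ n, C n) = Set.univ ∧
    ∀ n, ContinuousOn f (C n)

/-- A map is Δ⁰₂-measurable if preimages of open sets are both Fσ and Gδ. -/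
def Delta02Measurable {X Y : Type*} [TopologicalSpace X] [TopologicalSpace Y]
    (f : X → Y) : Prop :=
  ∀ U : Set Y, IsOpen U → IsFsigma (f ⁻¹' U) ∧ IsGδ (f ⁻¹' U)

/-- A map is Σ⁰₂-measurable if preimages of open sets are Fσ. -/
def Sigma02Measurable {X Y : Type*} [TopologicalSpace X] [TopologicalSpace Y]
    (f : X → Y) : Prop :=
  ∀ U : Set Y, IsOpen U → IsFsigma (f ⁻¹' U)

/-- X ⊆ Z is Souslin-F in Z: the result of the A-operation applied to a system
of closed subsets of Z, where `(List.range n).map α` encodes α|n. -/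
def SouslinF {Z : Type*} [TopologicalSpace Z] (X : Set Z) : Prop :=
  ∃ F : List ℕ → Set Z, (∀ s, IsClosed (F s)) ∧
    X = ⋃ α : ℕ → ℕ, ⋂ n : ℕ, F ((List.range n).map α)

/-- A space is completely Baire if every closed subspace is a Baire space. -/
def CompletelyBaire (Z : Type*) [TopologicalSpace Z] : Prop :=
  ∀ s : Set Z, IsClosed s → BaireSpace s

/-- Membership in the σ-ideal I_f: A is contained in an Fσ set F such that
the restriction f|F is piecewise continuous. -/
def MemIf {X Y : Type*} [TopologicalSpace X] [TopologicalSpace Y]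
    (f : X → Y) (A : Set X) : Prop :=
  ∃ F : Set X, IsFsigma F ∧ A ⊆ F ∧ PiecewiseContinuous (F.restrict f)

/-- A^f = f⁻¹(Y \ cl(A)). -/
def Af {X Y : Type*} [TopologicalSpace Y] (f : X → Y) (A : Set Y) : Set X :=
  f ⁻¹' (closure A)ᶜ

/-- The pair (x, X′) is f-irreducible outside A: for every open neighborhood V
of x, A^f ∩ X′ ∩ V ∉ I_f. -/
def IrredOutside {X Y : Type*} [TopologicalSpace X] [TopologicalSpace Y]
    (f : X → Y) (x : X) (X' : Set X) (A : Set Y) : Prop :=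
  ∀ V : Set X, IsOpen V → x ∈ V → ¬ MemIf f (Af f A ∩ X' ∩ V)

section Aux
variable {X Y : Type*} [TopologicalSpace X] [TopologicalSpace Y] {f : X → Y}

/-- Normalized membership in the σ-ideal I_f. -/
def InIf (f : X → Y) (E : Set X) : Prop :=
  ∃ C : ℕ → Set X, (∀ n, IsClosed (C n)) ∧ (∀ n, ContinuousOn f (C n)) ∧ E ⊆ ⋃ n, C n

lemma InIf.mono {E E' : Set X} (h : InIf f E') (hEE : E ⊆ E') : InIf f E := by
  obtain ⟨C, h1, h2, h3⟩ := h
  exact ⟨C, h1, h2, hEE.trans h3⟩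

lemma inIf_empty : InIf f ∅ :=
  ⟨fun _ => ∅, fun _ => isClosed_empty, fun _ => continuousOn_empty f, by simp⟩

lemma nonempty_of_not_inIf {E : Set X} (h : ¬ InIf f E) : E.Nonempty := by
  rcases E.eq_empty_or_nonempty with rfl | hne
  · exact absurd inIf_empty h
  · exact hne

lemma inIf_iUnion {E : ℕ → Set X} (h : ∀ n, InIf f (E n)) : InIf f (⋃ n, E n) := by
  choose C hcl hcont hsub using h
  refine ⟨fun k => C k.unpair.1 k.unpair.2, fun k => hcl _ _, fun k => hcont _ _, ?_⟩
  rintro z hz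
  obtain ⟨n, hn⟩ := mem_iUnion.1 hz
  obtain ⟨m, hm⟩ := mem_iUnion.1 (hsub n hn)
  exact mem_iUnion.2 ⟨Nat.pair n m, by simpa [Nat.unpair_pair] using hm⟩

lemma inIf_union {E E' : Set X} (h : InIf f E) (h' : InIf f E') : InIf f (E ∪ E') := by
  have := inIf_iUnion (f := f) (E := fun n => if n = 0 then E else E')
    (fun n => by by_cases hn : n = 0 <;> simp only [hn, if_true, if_false] <;> [exact h; exact h'])
  refine this.mono ?_
  rintro z (hz | hz)
  · exact mem_iUnion.2 ⟨0, by simpa using hz⟩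
  · exact mem_iUnion.2 ⟨1, by simpa using hz⟩

lemma continuousOn_of_restrict {F Z : Set X} (h : ContinuousOn (F.restrict f) (Subtype.val ⁻¹' Z)) :
    ContinuousOn f (F ∩ Z) := by
  rw [continuousOn_iff_continuous_restrict]
  have hι : Continuous fun x : (F ∩ Z : Set X) => (⟨x.1, x.2.1⟩ : F) :=
    Continuous.subtype_mk continuous_subtype_val _
  exact h.comp_continuous hι (fun x => x.2.2)

lemma memIf_iff_inIf {E : Set X} : MemIf f E ↔ InIf f E := by
  constructor
  · rintro ⟨F, ⟨D, hDcl, hFD⟩, hEF, ⟨P, hPcl, hPcov, hPcont⟩⟩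
    choose Z hZcl hZP using fun n => (isClosed_induced_iff.1 (hPcl n))
    refine ⟨fun k => Z k.unpair.1 ∩ D k.unpair.2, fun k => (hZcl _).inter (hDcl _),
      fun k => ?_, ?_⟩
    · have hDF : D k.unpair.2 ⊆ F := by rw [hFD]; exact subset_iUnion D _
      have : ContinuousOn f (F ∩ (Z k.unpair.1 ∩ D k.unpair.2)) := by
        apply continuousOn_of_restrict
        refine (hPcont k.unpair.1).mono ?_
        intro z hz
        rw [← hZP k.unpair.1]
        exact hz.1
      exact this.mono (fun z hz => ⟨hDF hz.2, hz⟩)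
    · intro z hz
      have hzF : z ∈ F := hEF hz
      have h1 : (⟨z, hzF⟩ : F) ∈ ⋃ n, P n := by rw [hPcov]; trivial
      obtain ⟨n, hn⟩ := mem_iUnion.1 h1
      have hzZ : z ∈ Z n := by rw [← hZP n] at hn; exact hn
      obtain ⟨m, hm⟩ := mem_iUnion.1 (hFD ▸ hzF)
      exact mem_iUnion.2 ⟨Nat.pair n m, by simp [Nat.unpair_pair]; exact ⟨hzZ, hm⟩⟩
  · rintro ⟨C, hcl, hcont, hsub⟩
    refine ⟨⋃ n, C n, ⟨C, hcl, rfl⟩, hsub, fun n => Subtype.val ⁻¹' C n,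
      fun n => (hcl n).preimage continuous_subtype_val, ?_, fun n => ?_⟩
    · ext ⟨z, hz⟩
      simpa using mem_iUnion.1 hz
    · exact (hcont n).comp continuous_subtype_val.continuousOn (fun x hx => hx)

end Aux
section Aux2
variable {X Y : Type*} [TopologicalSpace X] [TopologicalSpace Y] {f : X → Y}

lemma continuousOn_iUnion_of_locallyFinite {ι : Type*} {S : ι → Set X}
    (hS : LocallyFinite S) (hcl : ∀ i, IsClosed (S i)) (hc : ∀ i, ContinuousOn f (S i)) :
    ContinuousOn f (⋃ i, S i) := by
  intro x hx
  obtain ⟨N, hN, hfin⟩ := hS x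
  have hsingle : ∀ i : ι, ContinuousWithinAt f (S i) x := by
    intro i
    by_cases hxi : x ∈ S i
    · exact hc i x hxi
    · exact continuousWithinAt_of_notMem_closure (by rwa [(hcl i).closure_eq])
  classical
  have hfinset : ∀ s : Finset ι, ContinuousWithinAt f (⋃ i ∈ s, S i) x := by
    intro s
    induction s using Finset.induction with
    | empty =>
      refine continuousWithinAt_of_notMem_closure ?_
      simp
    | insert _ _ hni ih =>
      rw [Finset.set_biUnion_insert]
      exact (hsingle _).union ih
  refine (hfinset hfin.toFinset).mono_of_mem_nhdsWithin ?_
  have hsub : (⋃ i, S i) ∩ N ⊆ ⋃ i ∈ hfin.toFinset, S i := by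
    rintro z ⟨hz1, hz2⟩
    obtain ⟨i, hi⟩ := mem_iUnion.1 hz1
    exact mem_iUnion₂.2 ⟨i, hfin.mem_toFinset.2 ⟨z, hi, hz2⟩, hi⟩
  exact Filter.mem_of_superset (inter_mem_nhdsWithin _ hN) hsub

lemma inIf_iUnion_of_locallyFinite {ι : Type*} {W : ι → Set X} (hW : LocallyFinite W)
    {E : ι → Set X} (hE : ∀ i, InIf f (E i)) (hEW : ∀ i, E i ⊆ W i) :
    InIf f (⋃ i, E i) := by
  choose C hcl hcont hsub using hE
  have hWc : LocallyFinite fun i => closure (W i) := hW.closure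
  refine ⟨fun n => ⋃ i, (C i n ∩ closure (W i)), fun n => ?_, fun n => ?_, ?_⟩
  · exact (hWc.subset fun i => inter_subset_right).isClosed_iUnion
      (fun i => (hcl i n).inter isClosed_closure)
  · exact continuousOn_iUnion_of_locallyFinite
      (hWc.subset fun i => inter_subset_right)
      (fun i => (hcl i n).inter isClosed_closure)
      (fun i => (hcont i n).mono inter_subset_left)
  · intro z hz
    obtain ⟨i, hi⟩ := mem_iUnion.1 hz
    obtain ⟨n, hn⟩ := mem_iUnion.1 (hsub i hi)
    exact mem_iUnion.2 ⟨n, mem_iUnion.2 ⟨i, hn, subset_closure (hEW i hi)⟩⟩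

lemma isFsigma_of_isOpen' (hGdelta : ∀ s : Set X, IsClosed s → IsGδ s) {G : Set X}
    (hG : IsOpen G) : ∃ E : ℕ → Set X, (∀ n, IsClosed (E n)) ∧ G = ⋃ n, E n := by
  obtain ⟨T, hTo, hTc, hT⟩ := hGdelta Gᶜ hG.isClosed_compl
  rcases T.eq_empty_or_nonempty with rfl | hne
  · have : G = ∅ := by
      have : Gᶜ = univ := by simpa using hT
      simpa [compl_univ_iff] using this
    exact ⟨fun _ => ∅, fun _ => isClosed_empty, by simp [this]⟩
  · obtain ⟨e, he⟩ := hTc.exists_eq_range hne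
    refine ⟨fun n => (e n)ᶜ, fun n => (hTo _ (by rw [he]; exact mem_range_self n)).isClosed_compl, ?_⟩
    have h1 : Gᶜ = ⋂ n, e n := by rw [hT, he, sInter_range]
    rw [← compl_compl G, h1, compl_iInter]

lemma exists_strong_sep [RegularSpace Y] {B O : Set Y} {y : Y} (hO : IsOpen O) (hyO : y ∈ O)
    (hyB : y ∉ closure B) :
    ∃ U : Set Y, IsOpen U ∧ y ∈ U ∧ closure U ⊆ O ∧ closure U ∩ closure B = ∅ := by
  have h1 : O ∩ (closure B)ᶜ ∈ 𝓝 y :=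
    (hO.inter isClosed_closure.isOpen_compl).mem_nhds ⟨hyO, hyB⟩
  obtain ⟨t, ht, htc, hts⟩ := exists_mem_nhds_isClosed_subset h1
  have hcl : closure (interior t) ⊆ t := closure_minimal interior_subset htc
  refine ⟨interior t, isOpen_interior, mem_interior_iff_mem_nhds.2 ht,
    fun z hz => (hts (hcl hz)).1, ?_⟩
  rw [eq_empty_iff_forall_notMem]
  rintro z ⟨hz1, hz2⟩
  exact (hts (hcl hz1)).2 hz2

end Aux2
section ClaimC
variable {X Y : Type*} [TopologicalSpace X] [TopologicalSpace Y] {f : X → Y}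

lemma claimC [ParacompactSpace X] (hGdelta : ∀ s : Set X, IsClosed s → IsGδ s)
    [RegularSpace Y] (hf : Sigma02Measurable f)
    (B : Set Y) (S : Set X) (hS : S ⊆ Af f B) (hSn : ¬ InIf f S) :
    ∃ x : X, ∃ U : Set Y, IsOpen U ∧ closure U ∩ closure B = ∅ ∧ f x ∈ U ∧
      ∀ V : Set X, IsOpen V → x ∈ V → ¬ InIf f (S ∩ f ⁻¹' (closure U)ᶜ ∩ V) := by
  by_contra hcon
  push_neg at hcon
  -- hcon : ∀ x U, IsOpen U → closure U ∩ closure B = ∅ → f x ∈ U →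
  --   ∃ V, IsOpen V ∧ x ∈ V ∧ InIf f (S ∩ f ⁻¹' (closure U)ᶜ ∩ V)
  have conc : ∀ x : X, f x ∉ closure B → ∀ O : Set Y, IsOpen O → f x ∈ O →
      ∃ V : Set X, IsOpen V ∧ x ∈ V ∧ InIf f (S ∩ f ⁻¹' Oᶜ ∩ V) := by
    intro x hxB O hO hxO
    obtain ⟨U, hUo, hxU, hUO, hUB⟩ := exists_strong_sep hO hxO hxB
    obtain ⟨V, hVo, hxV, hV⟩ := hcon x U hUo hUB hxU
    refine ⟨V, hVo, hxV, hV.mono ?_⟩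
    rintro z ⟨⟨hz1, hz2⟩, hz3⟩
    exact ⟨⟨hz1, fun hc => hz2 (hUO hc)⟩, hz3⟩
  set G : Set X := ⋃₀ {V : Set X | IsOpen V ∧ InIf f (S ∩ V)} with hGdef
  have hGopen : IsOpen G := isOpen_sUnion (fun _ h => h.1)
  -- Part a : InIf f (S ∩ G)
  have ha : InIf f (S ∩ G) := by
    obtain ⟨E, hEcl, hEG⟩ := isFsigma_of_isOpen' hGdelta hGopen
    have hn : ∀ n, InIf f (S ∩ E n) := by
      intro n
      set ι := Option {V : Set X // IsOpen V ∧ InIf f (S ∩ V)} with hι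
      let u : ι → Set X := fun i => Option.elim i (E n)ᶜ (fun V => V.1)
      have uo : ∀ i, IsOpen (u i) := by rintro (_ | V); exacts [(hEcl n).isOpen_compl, V.2.1]
      have ucov : ⋃ i, u i = univ := by
        apply eq_univ_of_forall; intro z
        by_cases hz : z ∈ E n
        · have hzG : z ∈ G := by rw [hEG]; exact mem_iUnion.2 ⟨n, hz⟩
          obtain ⟨V, hV, hzV⟩ := hzG
          exact mem_iUnion.2 ⟨some ⟨V, hV⟩, hzV⟩
        · exact mem_iUnion.2 ⟨none, hz⟩
      obtain ⟨v, hvo, hvcov, hvlf, hvsub⟩ := precise_refinement u uo ucov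
      have hbig : InIf f (⋃ i, (S ∩ v i ∩ E n)) := by
        apply inIf_iUnion_of_locallyFinite hvlf
        · rintro (_ | V)
          · refine inIf_empty.mono ?_
            rintro z ⟨⟨_, hz2⟩, hz3⟩
            exact (hvsub none hz2 hz3 : z ∈ (∅ : Set X))
          · exact V.2.2.mono (fun z hz => ⟨hz.1.1, hvsub _ hz.1.2⟩)
        · exact fun i => fun z hz => hz.1.2
      refine hbig.mono ?_
      rintro z ⟨hz1, hz2⟩
      have : z ∈ ⋃ i, v i := by rw [hvcov]; trivial
      obtain ⟨i, hi⟩ := mem_iUnion.1 this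
      exact mem_iUnion.2 ⟨i, ⟨hz1, hi⟩, hz2⟩
    have : InIf f (⋃ n, S ∩ E n) := inIf_iUnion hn
    refine this.mono ?_
    rintro z ⟨hz1, hz2⟩
    rw [hEG] at hz2
    obtain ⟨n, hn'⟩ := mem_iUnion.1 hz2
    exact mem_iUnion.2 ⟨n, hz1, hn'⟩
  -- Part b : InIf f (S ∩ Gᶜ)
  obtain ⟨D, hDcl, hDeq⟩ := hf (closure B)ᶜ isClosed_closure.isOpen_compl
  have hKcont : ∀ m, ContinuousOn f (Gᶜ ∩ D m) := by
    intro m x hx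
    have hxB : f x ∉ closure B := by
      have : x ∈ f ⁻¹' (closure B)ᶜ := by rw [hDeq]; exact mem_iUnion.2 ⟨m, hx.2⟩
      exact this
    rw [ContinuousWithinAt, (nhds_basis_opens (f x)).tendsto_right_iff]
    rintro O ⟨hfxO, hOo⟩
    obtain ⟨U, hUo, hfxU, hUO, hUB⟩ := exists_strong_sep hOo hfxO hxB
    obtain ⟨V₀, hV₀o, hxV₀, hV₀⟩ := hcon x U hUo hUB hfxU
    have hmem : V₀ ∩ (Gᶜ ∩ D m) ⊆ {z | f z ∈ O} := by
      rintro z ⟨hzV₀, hzG, hzD⟩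
      suffices hcl : f z ∈ closure U from hUO hcl
      by_contra hfz
      have hzB : f z ∉ closure B := by
        have : z ∈ f ⁻¹' (closure B)ᶜ := by rw [hDeq]; exact mem_iUnion.2 ⟨m, hzD⟩
        exact this
      obtain ⟨V₁, hV₁o, hzV₁, hV₁⟩ :=
        conc z hzB (closure U)ᶜ isClosed_closure.isOpen_compl hfz
      have hsmall : InIf f (S ∩ (V₀ ∩ V₁)) := by
        refine (inIf_union hV₀ hV₁).mono ?_
        rintro w ⟨hw1, hw2, hw3⟩
        by_cases hfw : f w ∈ closure U
        · right; exact ⟨⟨hw1, by simpa using hfw⟩, hw3⟩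
        · left; exact ⟨⟨hw1, hfw⟩, hw2⟩
      exact hzG ⟨V₀ ∩ V₁, ⟨hV₀o.inter hV₁o, hsmall⟩, hzV₀, hzV₁⟩
    exact mem_nhdsWithin.2 ⟨V₀, hV₀o, hxV₀, hmem⟩
  have hb : InIf f (S ∩ Gᶜ) := by
    refine ⟨fun m => Gᶜ ∩ D m, fun m => hGopen.isClosed_compl.inter (hDcl m), hKcont, ?_⟩
    rintro z ⟨hz1, hz2⟩
    have : z ∈ f ⁻¹' (closure B)ᶜ := hS hz1
    rw [hDeq] at this
    obtain ⟨m, hm⟩ := mem_iUnion.1 this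
    exact mem_iUnion.2 ⟨m, hz2, hm⟩
  refine hSn ((inIf_union ha hb).mono ?_)
  intro z hz
  by_cases hzG : z ∈ G
  · exact Or.inl ⟨hz, hzG⟩
  · exact Or.inr ⟨hz, hzG⟩

end ClaimC
section Iter
variable {X Y : Type*} [TopologicalSpace X] [TopologicalSpace Y] {f : X → Y}

lemma iterateCand [ParacompactSpace X] (hGdelta : ∀ s : Set X, IsClosed s → IsGδ s)
    [RegularSpace Y] (hf : Sigma02Measurable f)
    (A : Set Y) (X' : Set X) (hsub : X' ⊆ Af f A) (hX' : ¬ InIf f X') :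
    ∀ m : ℕ, ∃ (x : Fin m → X) (U : Fin m → Set Y),
      (∀ j, IsOpen (U j)) ∧ (∀ j, closure (U j) ∩ closure A = ∅) ∧
      (∀ i j, i ≠ j → closure (U i) ∩ closure (U j) = ∅) ∧
      (∀ j, f (x j) ∈ U j) ∧ (∀ j, x j ∈ closure X') ∧
      (∀ j, IrredOutside f (x j) X' (A ∪ U j)) ∧
      ¬ InIf f (X' ∩ ⋂ j, f ⁻¹' (closure (U j))ᶜ) := by
  intro m
  induction m with
  | zero =>
    refine ⟨Fin.elim0, Fin.elim0, fun j => j.elim0, fun j => j.elim0, fun i => i.elim0,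
      fun j => j.elim0, fun j => j.elim0, fun j => j.elim0, ?_⟩
    simpa [iInter_of_empty] using hX'
  | succ m ih =>
    obtain ⟨x, U, hUo, hUA, hUU, hfxU, hxcl, hirrX, hSm⟩ := ih
    set S := X' ∩ ⋂ j, f ⁻¹' (closure (U j))ᶜ with hSdef
    set B := A ∪ ⋃ j, U j with hBdef
    have hclB : closure B ⊆ closure A ∪ ⋃ j, closure (U j) := by
      apply closure_minimal
      · rintro z (hz | hz)
        · exact Or.inl (subset_closure hz)
        · obtain ⟨j, hj⟩ := mem_iUnion.1 hz
          exact Or.inr (mem_iUnion.2 ⟨j, subset_closure hj⟩)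
      · exact isClosed_closure.union (isClosed_iUnion_of_finite fun j => isClosed_closure)
    have hSB : S ⊆ Af f B := by
      rintro z ⟨hz1, hz2⟩ hc
      rcases hclB hc with h | h
      · exact hsub hz1 h
      · obtain ⟨j, hj⟩ := mem_iUnion.1 h
        exact (mem_iInter.1 hz2 j) hj
    obtain ⟨x₀, U₀, hU₀o, hU₀B, hfx₀, hx₀irr⟩ := claimC hGdelta hf B S hSB hSm
    have hU₀A : closure U₀ ∩ closure A = ∅ := by
      rw [eq_empty_iff_forall_notMem] at hU₀B ⊢
      intro z hz
      exact hU₀B z ⟨hz.1, closure_mono subset_union_left hz.2⟩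
    have hU₀Uj : ∀ j, closure U₀ ∩ closure (U j) = ∅ := by
      intro j
      rw [eq_empty_iff_forall_notMem] at hU₀B ⊢
      intro z hz
      refine hU₀B z ⟨hz.1, closure_mono ?_ hz.2⟩
      exact subset_union_right.trans' (subset_iUnion U j) |>.trans (le_refl _)
    refine ⟨Fin.snoc x x₀, Fin.snoc U U₀, ?_, ?_, ?_, ?_, ?_, ?_, ?_⟩
    · intro j
      refine Fin.lastCases ?_ (fun i => ?_) j
      · simpa using hU₀o
      · simpa using hUo i
    · intro j
      refine Fin.lastCases ?_ (fun i => ?_) j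
      · simpa using hU₀A
      · simpa using hUA i
    · intro i j
      refine Fin.lastCases ?_ (fun i' => ?_) i
      · refine Fin.lastCases ?_ (fun j' => ?_) j
        · intro hij; exact absurd rfl hij
        · intro _; rw [Fin.snoc_last, Fin.snoc_castSucc]; exact hU₀Uj j'
      · refine Fin.lastCases ?_ (fun j' => ?_) j
        · intro _; rw [Fin.snoc_castSucc, Fin.snoc_last, inter_comm]; exact hU₀Uj i'
        · intro hij
          rw [Fin.snoc_castSucc, Fin.snoc_castSucc]
          exact hUU i' j' (fun h => hij (congrArg Fin.castSucc h))
    · intro j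
      refine Fin.lastCases ?_ (fun i => ?_) j
      · simpa using hfx₀
      · simpa using hfxU i
    · intro j
      refine Fin.lastCases ?_ (fun i => ?_) j
      · -- x₀ ∈ closure X'
        simp only [Fin.snoc_last]
        rw [mem_closure_iff]
        intro V hVo hxV
        have := nonempty_of_not_inIf (hx₀irr V hVo hxV)
        obtain ⟨z, hz⟩ := this
        exact ⟨z, hz.2, hz.1.1.1⟩
      · simpa using hxcl i
    · intro j
      refine Fin.lastCases ?_ (fun i => ?_) j
      · -- IrredOutside f x₀ X' (A ∪ U₀)
        simp only [Fin.snoc_last]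
        intro V hVo hxV hmem
        refine hx₀irr V hVo hxV (((memIf_iff_inIf).1 hmem).mono ?_)
        rintro z ⟨⟨⟨hz1, hz2⟩, hz3⟩, hz4⟩
        refine ⟨⟨?_, hz1⟩, hz4⟩
        intro hc
        rw [closure_union] at hc
        rcases hc with h | h
        · exact hsub hz1 h
        · exact hz3 h
      · simpa using hirrX i
    · -- ¬ InIf of the new intersection
      intro hbig
      refine hx₀irr univ isOpen_univ (mem_univ x₀) (hbig.mono ?_)
      rintro z ⟨⟨⟨hzX, hzI⟩, hzpre⟩, -⟩
      refine ⟨hzX, mem_iInter.2 fun j => ?_⟩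
      refine Fin.lastCases ?_ (fun i => ?_) j
      · simpa using hzpre
      · simpa using mem_iInter.1 hzI i

end Iter
/-- The Claim in the proof of the main lemma: given finitely many pairs
(x_t, V_t) each f-irreducible outside A, and X′ ⊆ A^f with X′ ∉ I_f, there are
x ∈ cl(X′) and an open U strongly disjoint from A with f(x) ∈ U such that every
(x_t, V_t), as well as (x, X′), is f-irreducible outside A ∪ U. -/
theorem statement10 {X Y : Type*} [TopologicalSpace X] [TopologicalSpace Y]
    [ParacompactSpace X] (hGdelta : ∀ s : Set X, IsClosed s → IsGδ s)
    [RegularSpace Y]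
    (f : X → Y) (hf : Sigma02Measurable f)
    (A : Set Y) (k : ℕ) (xs : Fin k → X) (Vs : Fin k → Set X)
    (hirr : ∀ t, IrredOutside f (xs t) (Vs t) A)
    (X' : Set X) (hsub : X' ⊆ Af f A) (hX' : ¬ MemIf f X') :
    ∃ x ∈ closure X', ∃ U : Set Y, IsOpen U ∧ closure U ∩ closure A = ∅ ∧
      f x ∈ U ∧ (∀ t, IrredOutside f (xs t) (Vs t) (A ∪ U)) ∧
      IrredOutside f x X' (A ∪ U) := by
  have hX'' : ¬ InIf f X' := fun h => hX' (memIf_iff_inIf.2 h)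
  obtain ⟨x, U, hUo, hUA, hUU, hfxU, hxcl, hirrX, -⟩ :=
    iterateCand hGdelta hf A X' hsub hX'' (k + 1)
  have hex : ∃ j : Fin (k + 1), ∀ t : Fin k, IrredOutside f (xs t) (Vs t) (A ∪ U j) := by
    by_contra hcon
    push_neg at hcon
    choose g hg using hcon
    obtain ⟨i, j, hij, hgij⟩ := Fintype.exists_ne_map_eq_of_card_lt g (by simp)
    set t := g i with ht
    have hi := hg i
    have hj := hg j
    rw [← hgij] at hj
    rw [← ht] at hi
    simp only [IrredOutside] at hi hj
    push_neg at hi hj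
    obtain ⟨Vi, hVio, hxVi, hMi⟩ := hi
    obtain ⟨Vj, hVjo, hxVj, hMj⟩ := hj
    have hmem := hirr t (Vi ∩ Vj) (hVio.inter hVjo) ⟨hxVi, hxVj⟩
    apply hmem
    rw [memIf_iff_inIf]
    refine (inIf_union (memIf_iff_inIf.1 hMi) (memIf_iff_inIf.1 hMj)).mono ?_
    rintro z ⟨⟨hzA, hzV⟩, hzVi, hzVj⟩
    have hdisj := hUU i j hij
    have hor : f z ∉ closure (U i) ∨ f z ∉ closure (U j) := by
      by_contra hc
      push_neg at hc
      exact (eq_empty_iff_forall_notMem.1 hdisj (f z)) ⟨hc.1, hc.2⟩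
    rcases hor with h | h
    · left
      refine ⟨⟨?_, hzV⟩, hzVi⟩
      intro hc
      rw [closure_union] at hc
      rcases hc with hc | hc
      exacts [hzA hc, h hc]
    · right
      refine ⟨⟨?_, hzV⟩, hzVj⟩
      intro hc
      rw [closure_union] at hc
      rcases hc with hc | hc
      exacts [hzA hc, h hc]
  obtain ⟨j, hj⟩ := hex
  exact ⟨x j, hxcl j, U j, hUo j, hUA j, hfxU j, hj, hirrX j⟩
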